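/- (Kilmer–Saeki) Let ρ and τ be nonnegative finite measures on a measurable space X. Then ρ and τ are mutually singular if and only if for every ε > 0 there exists a nonnegative measurable function f on X with f > 0 τ-almost everywhere such that (∫ f dρ)·(∫ (1/f) dτ) < ε. -/

import Mathlib

open MeasureTheory Filter Topology Real
open scoped ENNReal NNReal

/-- Kilmer–Saeki: For finite nonnegative measures `ρ`, `τ` on a measurable
space `X`, `ρ ⊥ τ` iff for every `ε > 0` there is a nonnegative measurable `f` with
`f > 0` τ-a.e. and `(∫ f dρ) · (∫ 1/f dτ) < ε`. -/
theorem kilmer_saeki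
    {X : Type*} [MeasurableSpace X] (ρ τ : Measure X)
    [IsFiniteMeasure ρ] [IsFiniteMeasure τ] :
    Measure.MutuallySingular ρ τ ↔
      ∀ ε : ℝ, 0 < ε → ∃ f : X → ℝ≥0, Measurable f ∧ (∀ᵐ x ∂τ, 0 < f x) ∧
        (∫⁻ x, (f x : ℝ≥0∞) ∂ρ) * (∫⁻ x, (f x : ℝ≥0∞)⁻¹ ∂τ) < ENNReal.ofReal ε := by
  classical
  constructor
  · rintro ⟨s, hm, h1, h2⟩ ε hε
    obtain ⟨δ, hδ0, hδ⟩ := ENNReal.exists_nnreal_pos_mul_lt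
      (a := ρ Set.univ * τ Set.univ) (ENNReal.mul_ne_top (measure_ne_top _ _) (measure_ne_top _ _))
      (ENNReal.ofReal_pos.mpr hε).ne'
    refine ⟨s.piecewise (fun _ => 1) (fun _ => δ), Measurable.piecewise hm
      measurable_const measurable_const, ?_, ?_⟩
    · filter_upwards with x
      by_cases hx : x ∈ s
      · simp [Set.piecewise_eq_of_mem _ _ _ hx]
      · simp [Set.piecewise_eq_of_notMem _ _ _ hx, hδ0]
    · have hρint : ∫⁻ x, ((s.piecewise (fun _ => 1) (fun _ => δ) x : ℝ≥0) : ℝ≥0∞) ∂ρ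
          ≤ ↑δ * ρ Set.univ := by
        rw [← lintegral_add_compl _ hm, setLIntegral_measure_zero _ _ h1, zero_add]
        calc ∫⁻ x in sᶜ, ((s.piecewise (fun _ => 1) (fun _ => δ) x : ℝ≥0) : ℝ≥0∞) ∂ρ
            = ∫⁻ _ in sᶜ, (δ : ℝ≥0∞) ∂ρ := by
              refine setLIntegral_congr_fun hm.compl ?_
              intro x hx
              simp [Set.piecewise_eq_of_notMem _ _ _ (Set.notMem_of_mem_compl hx)]
          _ = ↑δ * ρ sᶜ := by rw [setLIntegral_const, mul_comm]
          _ ≤ ↑δ * ρ Set.univ := by gcongr; exact Set.subset_univ _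
      have hτint : ∫⁻ x, ((s.piecewise (fun _ => 1) (fun _ => δ) x : ℝ≥0) : ℝ≥0∞)⁻¹ ∂τ
          ≤ τ Set.univ := by
        rw [← lintegral_add_compl _ hm, setLIntegral_measure_zero _ _ h2, add_zero]
        calc ∫⁻ x in s, ((s.piecewise (fun _ => 1) (fun _ => δ) x : ℝ≥0) : ℝ≥0∞)⁻¹ ∂τ
            = ∫⁻ _ in s, (1 : ℝ≥0∞) ∂τ := by
              refine setLIntegral_congr_fun hm ?_
              intro x hx
              simp [Set.piecewise_eq_of_mem _ _ _ hx]
          _ = τ s := by simp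
          _ ≤ τ Set.univ := measure_mono (Set.subset_univ _)
      calc (∫⁻ x, ((s.piecewise (fun _ => 1) (fun _ => δ) x : ℝ≥0) : ℝ≥0∞) ∂ρ) *
            (∫⁻ x, ((s.piecewise (fun _ => 1) (fun _ => δ) x : ℝ≥0) : ℝ≥0∞)⁻¹ ∂τ)
          ≤ (↑δ * ρ Set.univ) * τ Set.univ := mul_le_mul' hρint hτint
        _ = ↑δ * (ρ Set.univ * τ Set.univ) := by rw [mul_assoc]
        _ < ENNReal.ofReal ε := hδ
  · intro h
    rcases eq_or_ne τ 0 with rfl | hτ0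
    · exact Measure.MutuallySingular.zero_right
    by_cases hA0 : ∃ f : X → ℝ≥0, Measurable f ∧ (∀ᵐ x ∂τ, 0 < f x) ∧
        ∫⁻ x, (f x : ℝ≥0∞) ∂ρ = 0
    · obtain ⟨f, hf, hfpos, hf0⟩ := hA0
      have hae : ∀ᵐ x ∂ρ, ((f x : ℝ≥0∞)) = 0 :=
        (lintegral_eq_zero_iff hf.coe_nnreal_ennreal).mp hf0
      refine ⟨{x | 0 < f x}, measurableSet_lt measurable_const hf, ?_, ?_⟩
      · refine measure_mono_null ?_ (ae_iff.mp hae)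
        intro x hx
        simp only [Set.mem_setOf_eq] at hx ⊢
        simp [hx.ne']
      · have := ae_iff.mp hfpos
        simpa [Set.compl_setOf, pos_iff_ne_zero] using this
    push_neg at hA0
    have H : ∀ n : ℕ, ∃ f : X → ℝ≥0, Measurable f ∧ (∀ᵐ x ∂τ, 0 < f x) ∧
        (∫⁻ x, (f x : ℝ≥0∞) ∂ρ) * (∫⁻ x, (f x : ℝ≥0∞)⁻¹ ∂τ)
          < (2⁻¹ : ℝ≥0∞) ^ n * (2⁻¹ : ℝ≥0∞) ^ n := by
      intro n
      obtain ⟨f, h1, h2, h3⟩ := h ((2⁻¹ : ℝ) ^ n * (2⁻¹ : ℝ) ^ n) (by positivity)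
      refine ⟨f, h1, h2, ?_⟩
      have : ENNReal.ofReal ((2⁻¹ : ℝ) ^ n * (2⁻¹ : ℝ) ^ n)
          = (2⁻¹ : ℝ≥0∞) ^ n * (2⁻¹ : ℝ≥0∞) ^ n := by
        rw [ENNReal.ofReal_mul (by positivity), ENNReal.ofReal_pow (by norm_num),
          ENNReal.ofReal_inv_of_pos (by norm_num), ENNReal.ofReal_ofNat]
      rwa [this] at h3
    choose f hmeas hpos hprod using H
    set A : ℕ → ℝ≥0∞ := fun n => ∫⁻ x, (f n x : ℝ≥0∞) ∂ρ with hAdef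
    set B : ℕ → ℝ≥0∞ := fun n => ∫⁻ x, (f n x : ℝ≥0∞)⁻¹ ∂τ with hBdef
    have hAne : ∀ n, A n ≠ 0 := fun n => hA0 (f n) (hmeas n) (hpos n)
    have hBne : ∀ n, B n ≠ 0 := by
      intro n
      have : 0 < B n := by
        rw [hBdef]
        rw [lintegral_pos_iff_support (f := fun x => ((f n x : ℝ≥0∞))⁻¹) (hmeas n).coe_nnreal_ennreal.inv]
        have hsupp : Function.support (fun x => ((f n x : ℝ≥0∞))⁻¹) = Set.univ := by
          ext x
          simp [Function.support, ENNReal.inv_ne_zero]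
        rw [hsupp]
        exact Measure.measure_univ_pos.mpr hτ0
      exact this.ne'
    have hAtop : ∀ n, A n ≠ ∞ := by
      intro n hc
      have h2 : A n * B n < (2⁻¹ : ℝ≥0∞) ^ n * (2⁻¹ : ℝ≥0∞) ^ n := hprod n
      rw [hc, ENNReal.top_mul (hBne n)] at h2
      exact not_top_lt h2
    set t : ℕ → ℝ≥0∞ := fun n => A n * 2 ^ n with htdef
    have ht0 : ∀ n, t n ≠ 0 := fun n => by
      simp [htdef, hAne n]
    have httop : ∀ n, t n ≠ ∞ := fun n =>
      ENNReal.mul_ne_top (hAtop n) (by simp [ENNReal.pow_ne_top])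
    set E : ℕ → Set X := fun n => {x | t n ≤ (f n x : ℝ≥0∞)} with hEdef
    have hEmeas : ∀ n, MeasurableSet (E n) := fun n =>
      measurableSet_le measurable_const (hmeas n).coe_nnreal_ennreal
    have hρE : ∀ n, ρ (E n) ≤ (2⁻¹ : ℝ≥0∞) ^ n := by
      intro n
      have key : t n * ρ (E n) ≤ A n :=
        mul_meas_ge_le_lintegral (hmeas n).coe_nnreal_ennreal (t n)
      calc ρ (E n) = (t n)⁻¹ * (t n * ρ (E n)) := by
            rw [← mul_assoc, ENNReal.inv_mul_cancel (ht0 n) (httop n), one_mul]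
        _ ≤ (t n)⁻¹ * A n := by gcongr
        _ = (2⁻¹ : ℝ≥0∞) ^ n := by
            rw [htdef]
            rw [ENNReal.mul_inv (Or.inl (hAne n)) (Or.inl (hAtop n)), mul_comm (A n)⁻¹,
              mul_assoc, ENNReal.inv_mul_cancel (hAne n) (hAtop n), mul_one,
              ← ENNReal.inv_pow]
    have hτE : ∀ n, τ (E n)ᶜ ≤ (2⁻¹ : ℝ≥0∞) ^ n := by
      intro n
      have key : (t n)⁻¹ * τ {x | (t n)⁻¹ ≤ ((f n x : ℝ≥0∞))⁻¹} ≤ B n :=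
        mul_meas_ge_le_lintegral (hmeas n).coe_nnreal_ennreal.inv ((t n)⁻¹)
      have hsub : (E n)ᶜ ⊆ {x | (t n)⁻¹ ≤ ((f n x : ℝ≥0∞))⁻¹} := by
        intro x hx
        simp only [hEdef, Set.mem_compl_iff, Set.mem_setOf_eq, not_le] at hx
        exact ENNReal.inv_le_inv' hx.le
      calc τ (E n)ᶜ ≤ τ {x | (t n)⁻¹ ≤ ((f n x : ℝ≥0∞))⁻¹} := measure_mono hsub
        _ = t n * ((t n)⁻¹ * τ {x | (t n)⁻¹ ≤ ((f n x : ℝ≥0∞))⁻¹}) := by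
            rw [← mul_assoc, ENNReal.mul_inv_cancel (ht0 n) (httop n), one_mul]
        _ ≤ t n * B n := by gcongr
        _ = (A n * B n) * 2 ^ n := by rw [htdef]; ring
        _ ≤ ((2⁻¹ : ℝ≥0∞) ^ n * (2⁻¹ : ℝ≥0∞) ^ n) * 2 ^ n :=
            mul_le_mul_left (hprod n).le _
        _ = (2⁻¹ : ℝ≥0∞) ^ n := by
            rw [mul_assoc, ← mul_pow, ENNReal.inv_mul_cancel (by norm_num) (by norm_num),
              one_pow, mul_one]
    refine ⟨limsup E atTop, MeasurableSet.measurableSet_limsup hEmeas, ?_, ?_⟩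
    · refine measure_limsup_atTop_eq_zero ?_
      refine ne_top_of_le_ne_top ?_ (ENNReal.tsum_le_tsum hρE)
      rw [ENNReal.tsum_geometric]
      simp
    · have hlim : limsup E atTop = ⋂ n, ⋃ i, ⋃ _ : n ≤ i, E i := by
        rw [limsup_eq_iInf_iSup_of_nat]
        simp only [Set.iInf_eq_iInter, Set.iSup_eq_iUnion]
      rw [hlim]
      rw [Set.compl_iInter]
      simp only [Set.compl_iUnion]
      refine measure_iUnion_null fun n => ?_
      rw [← nonpos_iff_eq_zero]
      refine ge_of_tendsto (ENNReal.tendsto_pow_atTop_nhds_zero_of_lt_one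
        (by norm_num : (2⁻¹ : ℝ≥0∞) < 1)) ?_
      filter_upwards [eventually_ge_atTop n] with m hm
      calc τ (⋂ i, ⋂ _ : n ≤ i, (E i)ᶜ) ≤ τ (E m)ᶜ := by
            refine measure_mono ?_
            intro x hx
            simp only [Set.mem_iInter] at hx
            exact hx m hm
        _ ≤ (2⁻¹ : ℝ≥0∞) ^ m := hτE m
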